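/- For all vectors x, y in a real inner product space, √(1+‖x‖²)·√(1+‖y‖²) − ⟪x,y⟫ ≥ 1, and equality holds if and only if x = y. (Consequently the formula cosh d(x,y) = √(1+‖x‖²)·√(1+‖y‖²) − ⟪x,y⟫, d(x,y) ≥ 0, defines a well-defined quantity d with d(x,y) = 0 iff x = y.) -/

import Mathlib

open scoped RealInnerProductSpace

lemma sqrt_prod_ge {a b : ℝ} (ha : 0 ≤ a) (hb : 0 ≤ b) :
    1 + a * b ≤ Real.sqrt (1 + a ^ 2) * Real.sqrt (1 + b ^ 2) := by
  rw [← Real.sqrt_mul (by positivity)]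
  rw [show (1 + a * b) = Real.sqrt ((1 + a * b) ^ 2) from (Real.sqrt_sq (by positivity)).symm]
  apply Real.sqrt_le_sqrt
  nlinarith [sq_nonneg (a - b)]

/-- For all `x, y` in a real inner product space,
`√(1+‖x‖²)·√(1+‖y‖²) - ⟪x,y⟫ ≥ 1`, with equality iff `x = y`.  This makes the hyperbolic
distance `cosh d(x,y) = √(1+‖x‖²)·√(1+‖y‖²) - ⟪x,y⟫`, `d(x,y) ≥ 0`, well defined, with
`d(x,y) = 0` iff `x = y`. -/
theorem hyperbolic_cosh_ge_one {E : Type*} [NormedAddCommGroup E] [InnerProductSpace ℝ E]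
    (x y : E) :
    1 ≤ Real.sqrt (1 + ‖x‖ ^ 2) * Real.sqrt (1 + ‖y‖ ^ 2) - ⟪x, y⟫ ∧
      (Real.sqrt (1 + ‖x‖ ^ 2) * Real.sqrt (1 + ‖y‖ ^ 2) - ⟪x, y⟫ = 1 ↔ x = y) := by
  have hC : ⟪x, y⟫ ≤ ‖x‖ * ‖y‖ := real_inner_le_norm x y
  have hST : 1 + ‖x‖ * ‖y‖ ≤ Real.sqrt (1 + ‖x‖ ^ 2) * Real.sqrt (1 + ‖y‖ ^ 2) :=
    sqrt_prod_ge (norm_nonneg x) (norm_nonneg y)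
  refine ⟨by linarith, ?_, ?_⟩
  · intro h
    have h1 : ⟪x, y⟫ = ‖x‖ * ‖y‖ := by linarith
    have h2 : Real.sqrt (1 + ‖x‖ ^ 2) * Real.sqrt (1 + ‖y‖ ^ 2) = 1 + ‖x‖ * ‖y‖ := by linarith
    have h3 : ‖x‖ = ‖y‖ := by
      have := congrArg (· ^ 2) h2
      rw [mul_pow, Real.sq_sqrt (by positivity), Real.sq_sqrt (by positivity)] at this
      nlinarith [norm_nonneg x, norm_nonneg y, sq_abs (‖x‖ - ‖y‖), abs_nonneg (‖x‖ - ‖y‖)]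
    have h4 : ‖y‖ • x = ‖x‖ • y := (inner_eq_norm_mul_iff_real).mp h1
    rcases eq_or_ne ‖x‖ 0 with h0 | h0
    · have hx : x = 0 := norm_eq_zero.mp h0
      have hy : y = 0 := norm_eq_zero.mp (h3 ▸ h0)
      rw [hx, hy]
    · rw [← h3] at h4
      exact smul_right_injective E h0 h4
  · rintro rfl
    rw [real_inner_self_eq_norm_sq, Real.mul_self_sqrt (by positivity)]
    ring
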